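/- Let (B_t)_{t ≥ 0} be a standard one-dimensional Brownian motion and define M(t) := ∫_0^t cos(π(t − s)) B_s ds. Then for every L > 0, with positive probability one has M(t) ≥ L for all t ∈ [1/16, 3/16]; that is, P( ∀ t ∈ [1/16, 3/16], M(t) ≥ L ) > 0. -/

import Mathlib

open MeasureTheory ProbabilityTheory

/-- A standard one-dimensional Brownian motion on a probability space
`(Ω, P)`: it starts at `0`, has continuous sample paths, its increments over
`[s,t]` (for `0 ≤ s ≤ t`) are Gaussian with mean `0` and variance `t - s`,
and increments over disjoint consecutive intervals are independent. -/
structure IsBrownianMotion {Ω : Type*} [MeasurableSpace Ω] (P : Measure Ω)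
    (B : ℝ → Ω → ℝ) : Prop where
  isProbability : IsProbabilityMeasure P
  start : ∀ ω, B 0 ω = 0
  continuous_paths : ∀ ω, Continuous fun t => B t ω
  measurable : ∀ t, Measurable (B t)
  gaussian_increments : ∀ s t : ℝ, 0 ≤ s → s ≤ t →
    P.map (fun ω => B t ω - B s ω) = gaussianReal 0 (t - s).toNNReal
  indep_increments : ∀ (n : ℕ) (τ : ℕ → ℝ), Monotone τ → (∀ i, 0 ≤ τ i) →
    iIndepFun
      (fun i : Fin n => fun ω => B (τ (i + 1)) ω - B (τ i) ω) P

set_option linter.unusedSectionVars false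

namespace BMAux

variable {Ω : Type*} [MeasurableSpace Ω]

/-- grid point `k / (32 N)` as a rational. -/
def tq (N k : ℕ) : ℚ := (k : ℚ) / (32 * N)

lemma tq_cast (N k : ℕ) : ((tq N k : ℚ) : ℝ) = (k : ℝ) / (32 * N) := by
  unfold tq; push_cast; ring

lemma tq_zero (N : ℕ) : tq N 0 = 0 := by simp [tq]

lemma tq_le {N : ℕ} (hN : 0 < N) {a b : ℕ} (hab : a ≤ b) : tq N a ≤ tq N b := by
  unfold tq
  have h32 : (0:ℚ) < 32 * N := by positivity
  have hab' : (a:ℚ) ≤ b := by exact_mod_cast hab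
  gcongr

lemma tq_nonneg (N k : ℕ) : 0 ≤ tq N k := by
  unfold tq; positivity

lemma tq_6N {N : ℕ} (hN : 0 < N) : tq N (6 * N) = 3 / 16 := by
  unfold tq
  have hN' : (N:ℚ) ≠ 0 := by exact_mod_cast hN.ne'
  field_simp
  push_cast
  ring

lemma tq_N {N : ℕ} (hN : 0 < N) : tq N N = 1 / 32 := by
  unfold tq
  have hN' : (N:ℚ) ≠ 0 := by exact_mod_cast hN.ne'
  field_simp

lemma tq_le_316 {N : ℕ} (hN : 0 < N) {k : ℕ} (hk : k ≤ 6 * N) : tq N k ≤ 3 / 16 := by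
  rw [← tq_6N hN]; exact tq_le hN hk

lemma tq_succ_sub {N : ℕ} (hN : 0 < N) (k : ℕ) :
    ((tq N (k+1) : ℚ) : ℝ) - ((tq N k : ℚ) : ℝ) = (32 * N : ℝ)⁻¹ := by
  rw [tq_cast, tq_cast]
  have hN' : (N:ℝ) ≠ 0 := by exact_mod_cast hN.ne'
  field_simp
  push_cast
  ring

/-- telescoping sum -/
lemma sum_Ico_sub (f : ℕ → ℝ) {a b : ℕ} (hab : a ≤ b) :
    ∑ i ∈ Finset.Ico a b, (f (i + 1) - f i) = f b - f a := by
  rw [Finset.sum_Ico_eq_sub _ hab, Finset.sum_range_sub, Finset.sum_range_sub]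
  ring

lemma measurableSet_imp (p : Prop) {s : Set Ω} (hs : MeasurableSet s) :
    MeasurableSet {ω | p → ω ∈ s} := by
  by_cases hp : p
  · simpa [hp] using hs
  · simp [hp]

/-- covering lemma -/
lemma cover (T : ℕ → ℝ) {a b : ℕ} (hab : a < b) {s : ℝ} (h1 : T a ≤ s) (h2 : s ≤ T b) :
    ∃ k, a ≤ k ∧ k < b ∧ T k ≤ s ∧ s ≤ T (k + 1) := by
  suffices H : ∀ b, a + 1 ≤ b → s ≤ T b → ∃ k, a ≤ k ∧ k < b ∧ T k ≤ s ∧ s ≤ T (k + 1) from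
    H b hab h2
  intro b hb
  induction b, hb using Nat.le_induction with
  | base => intro h2; exact ⟨a, le_rfl, Nat.lt_succ_self a, h1, h2⟩
  | succ b hb ih =>
    intro h2
    rcases le_or_gt s (T b) with h | h
    · obtain ⟨k, hk1, hk2, hk3, hk4⟩ := ih h
      exact ⟨k, hk1, hk2.trans (Nat.lt_succ_self b), hk3, hk4⟩
    · exact ⟨b, by omega, Nat.lt_succ_self b, h.le, h2⟩

/-- rational density bound transfer -/
lemma ratDense {f : ℝ → ℝ} (hf : Continuous f) {a b : ℚ} {v : ℝ}
    (h : ∀ r : ℚ, a ≤ r → r ≤ b → v ≤ f r) {s : ℝ} (hs1 : (a:ℝ) ≤ s) (hs2 : s ≤ (b:ℝ)) :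
    v ≤ f s := by
  by_contra hc
  push_neg at hc
  have hab : a ≤ b := by exact_mod_cast hs1.trans hs2
  obtain ⟨δ, hδpos, hδ⟩ := Metric.continuous_iff.mp hf s (v - f s) (by linarith)
  rcases eq_or_lt_of_le hs1 with he | hlt
  · have := h a le_rfl hab
    rw [← he] at hc
    linarith
  · have hl : max (a:ℝ) (s - δ / 2) < s := max_lt hlt (by linarith)
    obtain ⟨r, hr1, hr2⟩ := exists_rat_btwn hl
    have hra : a ≤ r := by exact_mod_cast ((le_max_left (a:ℝ) _).trans hr1.le)
    have hrb : r ≤ b := by exact_mod_cast (hr2.le.trans hs2)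
    have hdist : dist (r:ℝ) s < δ := by
      rw [Real.dist_eq, abs_of_nonpos (by linarith)]
      have : s - δ / 2 ≤ r := (le_max_right (a:ℝ) _).trans hr1.le
      linarith
    have h1 := hδ (r:ℝ) hdist
    rw [Real.dist_eq] at h1
    have h2 := abs_lt.mp h1
    have := h r hra hrb
    linarith [h2.2]

/-! ### The oscillation bad event -/

def DSet (B : ℝ → Ω → ℝ) (δ : ℝ) : Set Ω :=
  ⋃ (r : ℚ) (q : ℚ) (_ : (r:ℝ) ∈ Set.Icc (0:ℝ) 1) (_ : (q:ℝ) ∈ Set.Icc (0:ℝ) 1)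
    (_ : |(r:ℝ) - (q:ℝ)| ≤ δ), {ω | 2⁻¹ < B (r:ℝ) ω - B (q:ℝ) ω}

lemma measurableSet_DSet {B : ℝ → Ω → ℝ} (hm : ∀ t, Measurable (B t)) (δ : ℝ) :
    MeasurableSet (DSet B δ) := by
  refine MeasurableSet.iUnion fun r => MeasurableSet.iUnion fun q => ?_
  refine MeasurableSet.iUnion fun _ => MeasurableSet.iUnion fun _ => MeasurableSet.iUnion fun _ => ?_
  exact measurableSet_lt measurable_const ((hm _).sub (hm _))

lemma DSet_mono {B : ℝ → Ω → ℝ} {δ δ' : ℝ} (h : δ ≤ δ') : DSet B δ ⊆ DSet B δ' := by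
  intro ω hω
  simp only [DSet, Set.mem_iUnion] at hω ⊢
  obtain ⟨r, q, h1, h2, h3, h4⟩ := hω
  exact ⟨r, q, h1, h2, h3.trans h, h4⟩

lemma iInter_DSet {B : ℝ → Ω → ℝ} (hcont : ∀ ω, Continuous fun t => B t ω) :
    ⋂ i : ℕ, DSet B ((i : ℝ) + 1)⁻¹ = ∅ := by
  ext ω
  simp only [Set.mem_iInter, Set.mem_empty_iff_false, iff_false, not_forall]
  have hUC := (isCompact_Icc (a := (0:ℝ)) (b := 1)).uniformContinuousOn_of_continuous
    ((hcont ω).continuousOn)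
  rw [Metric.uniformContinuousOn_iff] at hUC
  obtain ⟨δ, hδpos, hδ⟩ := hUC 2⁻¹ (by norm_num)
  obtain ⟨i, hi⟩ := exists_nat_gt δ⁻¹
  refine ⟨i, ?_⟩
  have hilt : ((i : ℝ) + 1)⁻¹ < δ := by
    rw [inv_lt_comm₀ (by positivity) hδpos]
    exact hi.trans (lt_add_one _)
  intro hmem
  simp only [DSet, Set.mem_iUnion] at hmem
  obtain ⟨r, q, h1, h2, h3, h4⟩ := hmem
  have hd : dist (r:ℝ) (q:ℝ) < δ := by
    rw [Real.dist_eq]; exact lt_of_le_of_lt h3 hilt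
  have := hδ (r:ℝ) h1 (q:ℝ) h2 hd
  rw [Real.dist_eq] at this
  have := abs_lt.mp this
  simp only [Set.mem_setOf_eq] at h4
  linarith [this.2]

/-! ### Gaussian lower bounds -/

lemma p1_pos : 0 < gaussianReal 0 1 (Set.Ici 1) := by
  rw [pos_iff_ne_zero]
  intro h0
  rw [gaussianReal_apply 0 one_ne_zero] at h0
  rw [lintegral_eq_zero_iff (measurable_gaussianPDF 0 1)] at h0
  have h1 : ∀ᵐ x, x ∈ Set.Ici (1:ℝ) → gaussianPDF 0 1 x = 0 :=
    (ae_restrict_iff' measurableSet_Ici).mp h0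
  rw [ae_iff] at h1
  have h2 : {x | ¬(x ∈ Set.Ici (1:ℝ) → gaussianPDF 0 1 x = 0)} = Set.Ici 1 := by
    ext x
    simp only [Set.mem_setOf_eq, Classical.not_imp, Set.mem_Ici]
    exact ⟨fun h => h.1, fun h => ⟨h, (gaussianPDF_pos 0 one_ne_zero x).ne'⟩⟩
  rw [h2, Real.volume_Ici] at h1
  exact ENNReal.top_ne_zero h1

lemma inc_prob {P : Measure Ω} {B : ℝ → Ω → ℝ} (hB : IsBrownianMotion P B)
    {a b : ℝ} (ha : 0 ≤ a) (hab : a < b) {cc : ℝ}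
    (hcc : cc ≤ Real.sqrt (b - a)) :
    gaussianReal 0 1 (Set.Ici 1) ≤ P {ω | cc ≤ B b ω - B a ω} := by
  have hmeas : Measurable fun ω => B b ω - B a ω := (hB.measurable b).sub (hB.measurable a)
  have hset : {ω | cc ≤ B b ω - B a ω} = (fun ω => B b ω - B a ω) ⁻¹' Set.Ici cc := rfl
  rw [hset, ← Measure.map_apply hmeas measurableSet_Ici, hB.gaussian_increments a b ha hab.le]
  have hv : (0:ℝ) < b - a := by linarith
  have hmap : gaussianReal 0 ((b - a).toNNReal)
      = (gaussianReal 0 1).map (fun x => Real.sqrt (b - a) * x) := by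
    rw [show (fun x => Real.sqrt (b-a) * x) = (Real.sqrt (b-a) * ·) from rfl,
      gaussianReal_map_const_mul]
    congr 1
    · ring
    · ext
      push_cast
      rw [mul_one]
      rw [Real.sq_sqrt hv.le]
      rw [Real.coe_toNNReal _ hv.le]
  rw [hmap, Measure.map_apply (measurable_const_mul _) measurableSet_Ici]
  refine measure_mono fun x hx => ?_
  simp only [Set.mem_Ici, Set.mem_preimage] at hx ⊢
  calc cc ≤ Real.sqrt (b - a) := hcc
  _ = Real.sqrt (b - a) * 1 := (mul_one _).symm
  _ ≤ Real.sqrt (b - a) * x := by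
      exact mul_le_mul_of_nonneg_left hx (Real.sqrt_nonneg _)

/-! ### Block events -/

/-- Stage-`m` block event: discrete oscillation control plus increment climb. -/
def GmSet (B : ℝ → Ω → ℝ) (N : ℕ) (cc : ℝ) (ρ : ℕ → ℚ) (m k : ℕ) : Set Ω :=
  {ω | (∀ j < m, (tq N k ≤ ρ j ∧ ρ j ≤ tq N (k + 1)) →
      B ((tq N k : ℚ) : ℝ) ω - B ((ρ j : ℚ) : ℝ) ω ≤ 2⁻¹) ∧
    cc ≤ B ((tq N (k + 1) : ℚ) : ℝ) ω - B ((tq N k : ℚ) : ℝ) ω}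

/-- Full block event: oscillation control over all rationals in the block plus climb. -/
def GSet (B : ℝ → Ω → ℝ) (N : ℕ) (cc : ℝ) (k : ℕ) : Set Ω :=
  {ω | (∀ r : ℚ, tq N k ≤ r → r ≤ tq N (k + 1) →
      B ((tq N k : ℚ) : ℝ) ω - B ((r : ℚ) : ℝ) ω ≤ 2⁻¹) ∧
    cc ≤ B ((tq N (k + 1) : ℚ) : ℝ) ω - B ((tq N k : ℚ) : ℝ) ω}

lemma measurableSet_GmSet {B : ℝ → Ω → ℝ} (hm : ∀ t, Measurable (B t))
    (N : ℕ) (cc : ℝ) (ρ : ℕ → ℚ) (m k : ℕ) : MeasurableSet (GmSet B N cc ρ m k) := by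
  have : GmSet B N cc ρ m k =
      (⋂ j : ℕ, {ω | j < m → ((tq N k ≤ ρ j ∧ ρ j ≤ tq N (k + 1)) →
        ω ∈ {ω | B ((tq N k : ℚ) : ℝ) ω - B ((ρ j : ℚ) : ℝ) ω ≤ 2⁻¹})}) ∩
      {ω | cc ≤ B ((tq N (k + 1) : ℚ) : ℝ) ω - B ((tq N k : ℚ) : ℝ) ω} := by
    ext ω
    simp only [GmSet, Set.mem_inter_iff, Set.mem_iInter, Set.mem_setOf_eq]
  rw [this]
  refine MeasurableSet.inter (MeasurableSet.iInter fun j => ?_)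
    (measurableSet_le measurable_const ((hm _).sub (hm _)))
  exact measurableSet_imp _ (measurableSet_imp _
    (measurableSet_le ((hm _).sub (hm _)) measurable_const))

/-! ### The product formula at a finite stage -/

lemma stage_prod {P : Measure Ω} {B : ℝ → Ω → ℝ} (hB : IsBrownianMotion P B)
    {N : ℕ} (hN : 0 < N) (cc : ℝ) (ρ : ℕ → ℚ)
    (hρ0 : ∀ j, 0 ≤ ρ j) (hρ1 : ∀ j, ρ j ≤ 3 / 16) (m : ℕ) :
    P (⋂ k ∈ Finset.range (6 * N), GmSet B N cc ρ m k)
      = ∏ k ∈ Finset.range (6 * N), P (GmSet B N cc ρ m k) := by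
  classical
  haveI := hB.isProbability
  set S : Finset ℝ :=
    ((Finset.range (6 * N + 1)).image fun k => ((tq N k : ℚ) : ℝ)) ∪
      ((Finset.range m).image fun j => ((ρ j : ℚ) : ℝ)) with hS
  have hTin : ∀ k ≤ 6 * N, ((tq N k : ℚ) : ℝ) ∈ S := fun k hk =>
    Finset.mem_union_left _ (Finset.mem_image_of_mem _ (Finset.mem_range.mpr (by omega)))
  have hρin : ∀ j < m, ((ρ j : ℚ) : ℝ) ∈ S := fun j hj =>
    Finset.mem_union_right _ (Finset.mem_image_of_mem _ (Finset.mem_range.mpr hj))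
  have hub : ∀ x ∈ S, x ≤ 3 / 16 := by
    intro x hx
    rw [hS] at hx
    simp only [Finset.mem_union, Finset.mem_image, Finset.mem_range] at hx
    rcases hx with ⟨k, hk, rfl⟩ | ⟨j, hj, rfl⟩
    · calc ((tq N k : ℚ) : ℝ) ≤ ((3 / 16 : ℚ) : ℝ) := by
            exact_mod_cast tq_le_316 hN (by omega)
        _ = 3 / 16 := by norm_num
    · calc ((ρ j : ℚ) : ℝ) ≤ ((3 / 16 : ℚ) : ℝ) := by exact_mod_cast hρ1 j
        _ = 3 / 16 := by norm_num
  have hlb : ∀ x ∈ S, 0 ≤ x := by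
    intro x hx
    rw [hS] at hx
    simp only [Finset.mem_union, Finset.mem_image, Finset.mem_range] at hx
    rcases hx with ⟨k, hk, rfl⟩ | ⟨j, hj, rfl⟩
    · exact_mod_cast tq_nonneg N k
    · exact_mod_cast hρ0 j
  set n : ℕ := S.card with hn
  have hnpos : 0 < n := Finset.card_pos.mpr ⟨_, hTin 0 (by omega)⟩
  set oi := S.orderIsoOfFin rfl with hoi
  set τ : ℕ → ℝ := fun i => if hi : i < n then (oi ⟨i, hi⟩ : ℝ) else 3 / 16 with hτ
  have hτmono : Monotone τ := by
    intro i j hij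
    simp only [hτ]
    by_cases hj : j < n
    · have hi : i < n := lt_of_le_of_lt hij hj
      rw [dif_pos hi, dif_pos hj]
      exact Subtype.coe_le_coe.mpr (oi.le_iff_le.mpr (Fin.mk_le_mk.mpr hij))
    · rw [dif_neg hj]
      by_cases hi : i < n
      · rw [dif_pos hi]
        exact hub _ (oi ⟨i, hi⟩).2
      · rw [dif_neg hi]
  have hτ0 : ∀ i, 0 ≤ τ i := by
    intro i
    simp only [hτ]
    by_cases hi : i < n
    · rw [dif_pos hi]; exact hlb _ (oi ⟨i, hi⟩).2
    · rw [dif_neg hi]; norm_num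
  set X : ℕ → Ω → ℝ := fun i ω => B (τ (i + 1)) ω - B (τ i) ω with hX
  have hInd : iIndepFun (fun i : Fin n => X (i : ℕ)) P :=
    hB.indep_increments n τ hτmono hτ0
  have hXm : ∀ i : Fin n, Measurable ((fun i : Fin n => X (i : ℕ)) i) := fun i =>
    (hB.measurable _).sub (hB.measurable _)
  set idx : ℝ → ℕ := fun x => if hx : x ∈ S then ((oi.symm ⟨x, hx⟩ : Fin n) : ℕ) else 0 with hidx
  have hidx_lt : ∀ x, x ∈ S → idx x < n := by
    intro x hx
    simp only [hidx, dif_pos hx]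
    exact (oi.symm ⟨x, hx⟩).isLt
  have hτidx : ∀ x (hx : x ∈ S), τ (idx x) = x := by
    intro x hx
    simp only [hidx, dif_pos hx, hτ]
    rw [dif_pos (oi.symm ⟨x, hx⟩).isLt]
    have h1 : (⟨((oi.symm ⟨x, hx⟩ : Fin n) : ℕ), (oi.symm ⟨x, hx⟩).isLt⟩ : Fin n)
        = oi.symm ⟨x, hx⟩ := by
      apply Fin.ext; rfl
    rw [h1, OrderIso.apply_symm_apply]
  have hidx_mono : ∀ x y, x ∈ S → y ∈ S → x ≤ y → idx x ≤ idx y := by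
    intro x y hx hy hxy
    simp only [hidx, dif_pos hx, dif_pos hy]
    have h1 : (⟨x, hx⟩ : {z // z ∈ S}) ≤ ⟨y, hy⟩ := Subtype.mk_le_mk.mpr hxy
    exact oi.symm.le_iff_le.mpr h1
  have tele : ∀ x y (hx : x ∈ S) (hy : y ∈ S), x ≤ y → ∀ ω,
      ∑ i ∈ Finset.Ico (idx x) (idx y), X i ω = B y ω - B x ω := by
    intro x y hx hy hxy ω
    have h1 := sum_Ico_sub (fun i => B (τ i) ω) (hidx_mono x y hx hy hxy)
    simp only [hX]
    rw [h1]
    show B (τ (idx y)) ω - B (τ (idx x)) ω = B y ω - B x ω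
    rw [hτidx x hx, hτidx y hy]
  set σs : ℕ → ℕ → (Fin n → ℝ) → ℝ :=
    fun a b v => ∑ i ∈ Finset.Ico a b, (if hi : i < n then v ⟨i, hi⟩ else 0) with hσs
  have hσmeas : ∀ a b, Measurable (σs a b) := by
    intro a b
    apply Finset.measurable_sum
    intro i _
    by_cases hi : i < n
    · simpa only [hσs, dif_pos hi] using measurable_pi_apply (⟨i, hi⟩ : Fin n)
    · simp only [hσs, dif_neg hi]; exact measurable_const
  set F : Ω → (Fin n → ℝ) := fun ω i => X (i : ℕ) ω with hF
  have hσF : ∀ a b, b ≤ n → ∀ ω, σs a b (F ω) = ∑ i ∈ Finset.Ico a b, X i ω := by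
    intro a b hb ω
    apply Finset.sum_congr rfl
    intro i hi
    have h1 : i < n := lt_of_lt_of_le (Finset.mem_Ico.mp hi).2 hb
    simp only [hσs, hF, dif_pos h1]
  have hσagree : ∀ a b (v w : Fin n → ℝ),
      (∀ i : Fin n, a ≤ (i : ℕ) → (i : ℕ) < b → v i = w i) → σs a b v = σs a b w := by
    intro a b v w hvw
    apply Finset.sum_congr rfl
    intro i hi
    rcases Finset.mem_Ico.mp hi with ⟨h1, h2⟩
    by_cases hin : i < n
    · simp only [dif_pos hin]
      exact hvw ⟨i, hin⟩ h1 h2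
    · simp only [dif_neg hin]
  set J : ℕ → ℕ := fun k => idx ((tq N k : ℚ) : ℝ) with hJ
  have hJmono : ∀ k k', k ≤ k' → k' ≤ 6 * N → J k ≤ J k' := by
    intro k k' h1 h2
    exact hidx_mono _ _ (hTin k (le_trans h1 h2)) (hTin k' h2)
      (by exact_mod_cast tq_le hN h1)
  set C : ℕ → Set (Fin n → ℝ) := fun k =>
    {v | (∀ j < m, (tq N k ≤ ρ j ∧ ρ j ≤ tq N (k + 1)) →
        - σs (J k) (idx ((ρ j : ℚ) : ℝ)) v ≤ 2⁻¹) ∧ cc ≤ σs (J k) (J (k + 1)) v} with hC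
  have hCmeas : ∀ k, MeasurableSet (C k) := by
    intro k
    have heq : C k =
        (⋂ j : ℕ, {v : Fin n → ℝ | j < m → ((tq N k ≤ ρ j ∧ ρ j ≤ tq N (k + 1)) →
          v ∈ {v : Fin n → ℝ | - σs (J k) (idx ((ρ j : ℚ) : ℝ)) v ≤ 2⁻¹})}) ∩
        {v : Fin n → ℝ | cc ≤ σs (J k) (J (k + 1)) v} := by
      ext v
      simp only [hC, Set.mem_inter_iff, Set.mem_iInter, Set.mem_setOf_eq]
    rw [heq]
    refine MeasurableSet.inter (MeasurableSet.iInter fun j => ?_)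
      (measurableSet_le measurable_const (hσmeas _ _))
    exact measurableSet_imp _ (measurableSet_imp _
      (measurableSet_le (hσmeas _ _).neg measurable_const))
  have hFC : ∀ k, k < 6 * N → F ⁻¹' (C k) = GmSet B N cc ρ m k := by
    intro k hk
    have hk1 : k ≤ 6 * N := hk.le
    have hk2 : k + 1 ≤ 6 * N := by omega
    ext ω
    simp only [Set.mem_preimage, hC, Set.mem_setOf_eq, GmSet]
    have e2 : σs (J k) (J (k + 1)) (F ω)
        = B ((tq N (k + 1) : ℚ) : ℝ) ω - B ((tq N k : ℚ) : ℝ) ω := by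
      rw [hσF _ _ (hidx_lt _ (hTin (k + 1) hk2)).le ω]
      exact tele _ _ (hTin k hk1) (hTin (k + 1) hk2)
        (by exact_mod_cast tq_le hN (Nat.le_succ k)) ω
    have e1 : ∀ j < m, (tq N k ≤ ρ j ∧ ρ j ≤ tq N (k + 1)) →
        σs (J k) (idx ((ρ j : ℚ) : ℝ)) (F ω)
          = B ((ρ j : ℚ) : ℝ) ω - B ((tq N k : ℚ) : ℝ) ω := by
      intro j hj hcond
      rw [hσF _ _ (hidx_lt _ (hρin j hj)).le ω]
      exact tele _ _ (hTin k hk1) (hρin j hj) (by exact_mod_cast hcond.1) ω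
    constructor
    · rintro ⟨h1, h2⟩
      refine ⟨fun j hj hc => ?_, by rw [← e2]; exact h2⟩
      have := h1 j hj hc
      rw [e1 j hj hc] at this
      linarith
    · rintro ⟨h1, h2⟩
      refine ⟨fun j hj hc => ?_, by rw [e2]; exact h2⟩
      rw [e1 j hj hc]
      have := h1 j hj hc
      linarith
  have hCcyl : ∀ k, k < 6 * N → ∀ v w : Fin n → ℝ,
      (∀ i : Fin n, J k ≤ (i : ℕ) → (i : ℕ) < J (k + 1) → v i = w i) →
      (v ∈ C k ↔ w ∈ C k) := by
    intro k hk v w hvw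
    have hsub : ∀ j, j < m → (tq N k ≤ ρ j ∧ ρ j ≤ tq N (k + 1)) →
        σs (J k) (idx ((ρ j : ℚ) : ℝ)) v = σs (J k) (idx ((ρ j : ℚ) : ℝ)) w := by
      intro j hj hcond
      apply hσagree
      intro i h1 h2
      refine hvw i h1 (lt_of_lt_of_le h2 ?_)
      exact hidx_mono _ _ (hρin j hj) (hTin (k + 1) (by omega)) (by exact_mod_cast hcond.2)
    have hmain : σs (J k) (J (k + 1)) v = σs (J k) (J (k + 1)) w := hσagree _ _ _ _ hvw
    simp only [hC, Set.mem_setOf_eq]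
    constructor
    · rintro ⟨h1, h2⟩
      exact ⟨fun j hj hc => by rw [← hsub j hj hc]; exact h1 j hj hc,
        by rw [← hmain]; exact h2⟩
    · rintro ⟨h1, h2⟩
      exact ⟨fun j hj hc => by rw [hsub j hj hc]; exact h1 j hj hc,
        by rw [hmain]; exact h2⟩
  have key : ∀ KK, KK ≤ 6 * N →
      P (⋂ k ∈ Finset.range KK, F ⁻¹' (C k)) = ∏ k ∈ Finset.range KK, P (F ⁻¹' (C k)) := by
    intro KK
    induction KK with
    | zero => intro _; simp
    | succ KK ih =>
      intro hKK
      have hKK' : KK ≤ 6 * N := by omega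
      rw [Finset.range_add_one, Finset.set_biInter_insert,
        Finset.prod_insert Finset.notMem_range_self]
      set SL : Finset (Fin n) := Finset.univ.filter (fun i : Fin n => (i : ℕ) < J KK) with hSL
      set SR : Finset (Fin n) := Finset.univ.filter (fun i : Fin n => ¬ (i : ℕ) < J KK) with hSR
      have hdisj : Disjoint SL SR := Finset.disjoint_filter_filter_not _ _ _
      have hIF := hInd.indepFun_finset SL SR hdisj hXm
      set eL : ({x // x ∈ SL} → ℝ) → (Fin n → ℝ) :=
        fun u i => if h : i ∈ SL then u ⟨i, h⟩ else 0 with heL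
      set eR : ({x // x ∈ SR} → ℝ) → (Fin n → ℝ) :=
        fun u i => if h : i ∈ SR then u ⟨i, h⟩ else 0 with heR
      have heLmeas : Measurable eL := by
        apply measurable_pi_lambda
        intro i
        by_cases h : i ∈ SL
        · simpa only [heL, dif_pos h] using measurable_pi_apply _
        · simp only [heL, dif_neg h]; exact measurable_const
      have heRmeas : Measurable eR := by
        apply measurable_pi_lambda
        intro i
        by_cases h : i ∈ SR
        · simpa only [heR, dif_pos h] using measurable_pi_apply _
        · simp only [heR, dif_neg h]; exact measurable_const
      set FL : Ω → ({x // x ∈ SL} → ℝ) := fun a i => X ((i : Fin n) : ℕ) a with hFL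
      set FR : Ω → ({x // x ∈ SR} → ℝ) := fun a i => X ((i : Fin n) : ℕ) a with hFR
      have hIF' : IndepFun FL FR P := hIF
      have hmemSL : ∀ i : Fin n, (i : ℕ) < J KK → i ∈ SL := by
        intro i hi
        simp only [hSL, Finset.mem_filter, Finset.mem_univ, true_and]
        exact hi
      have hmemSR : ∀ i : Fin n, J KK ≤ (i : ℕ) → i ∈ SR := by
        intro i hi
        simp only [hSR, Finset.mem_filter, Finset.mem_univ, true_and]
        omega
      have hLeq : ∀ k, k < KK → F ⁻¹' (C k) = FL ⁻¹' (eL ⁻¹' (C k)) := by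
        intro k hk
        ext ω
        simp only [Set.mem_preimage]
        refine hCcyl k (by omega) (F ω) (eL (FL ω)) ?_
        intro i h1 h2
        have hik : (i : ℕ) < J KK := lt_of_lt_of_le h2 (hJmono (k + 1) KK (by omega) hKK')
        have hmem := hmemSL i hik
        simp only [heL, hFL, hF, dif_pos hmem]
      have hReq : F ⁻¹' (C KK) = FR ⁻¹' (eR ⁻¹' (C KK)) := by
        ext ω
        simp only [Set.mem_preimage]
        refine hCcyl KK (by omega) (F ω) (eR (FR ω)) ?_
        intro i h1 _
        have hmem := hmemSR i h1
        simp only [heR, hFR, hF, dif_pos hmem]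
      have hA : (⋂ k ∈ Finset.range KK, F ⁻¹' (C k))
          = FL ⁻¹' (⋂ k ∈ Finset.range KK, eL ⁻¹' (C k)) := by
        rw [Set.preimage_iInter₂]
        exact Set.iInter₂_congr fun k hk => hLeq k (Finset.mem_range.mp hk)
      rw [hReq, hA, Set.inter_comm]
      rw [hIF'.meas_inter
        ⟨⋂ k ∈ Finset.range KK, eL ⁻¹' (C k),
          MeasurableSet.biInter (Set.to_countable _)
            (fun k _ => (hCmeas k).preimage heLmeas), rfl⟩
        ⟨eR ⁻¹' (C KK), (hCmeas KK).preimage heRmeas, rfl⟩]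
      rw [← hA, ← hReq, ih hKK', mul_comm]
  have hiEq : (⋂ k ∈ Finset.range (6 * N), GmSet B N cc ρ m k)
      = ⋂ k ∈ Finset.range (6 * N), F ⁻¹' (C k) :=
    Set.iInter₂_congr fun k hk => (hFC k (Finset.mem_range.mp hk)).symm
  rw [hiEq, key (6 * N) le_rfl]
  exact Finset.prod_congr rfl fun k hk => by rw [hFC k (Finset.mem_range.mp hk)]

/-! ### The deterministic integral estimate -/

lemma integral_bound (g : ℝ → ℝ) (hg : Continuous g) (K : ℝ) (hK : 1 ≤ K)
    (hlow : ∀ s ∈ Set.Icc (0 : ℝ) (3 / 16), -2⁻¹ ≤ g s)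
    (hhigh : ∀ s ∈ Set.Icc (1 / 32 : ℝ) (3 / 16), K ≤ g s)
    {t : ℝ} (ht : t ∈ Set.Icc (1 / 16 : ℝ) (3 / 16)) :
    (K - 1) / 64 ≤ ∫ s in (0 : ℝ)..t, Real.cos (Real.pi * (t - s)) * g s := by
  obtain ⟨ht1, ht2⟩ := ht
  have h32 : (1 / 32 : ℝ) ≤ t := by linarith
  have hπ := Real.pi_pos
  set f : ℝ → ℝ := fun s => Real.cos (Real.pi * (t - s)) * g s with hf
  have hfc : Continuous f := by
    apply Continuous.mul _ hg
    exact Real.continuous_cos.comp (continuous_const.mul (continuous_const.sub continuous_id))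
  have hint : ∀ a b : ℝ, IntervalIntegrable f volume a b := fun a b =>
    hfc.intervalIntegrable a b
  have hcos_bounds : ∀ s, 0 ≤ s → s ≤ t →
      0 ≤ Real.cos (Real.pi * (t - s)) ∧ Real.cos (Real.pi * (t - s)) ≤ 1 := by
    intro s hs1 hs2
    constructor
    · apply Real.cos_nonneg_of_mem_Icc
      constructor
      · have : 0 ≤ Real.pi * (t - s) := by
          apply mul_nonneg hπ.le; linarith
        linarith
      · have : Real.pi * (t - s) ≤ Real.pi * (1 / 2) := by
          apply mul_le_mul_of_nonneg_left _ hπ.le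
          linarith
        linarith [this]
    · exact Real.cos_le_one _
  have piece1 : -(1 : ℝ) / 64 ≤ ∫ s in (0 : ℝ)..(1 / 32), f s := by
    have hmono := intervalIntegral.integral_mono_on (by norm_num : (0:ℝ) ≤ 1/32)
      (intervalIntegrable_const (c := (-2⁻¹ : ℝ))) (hint 0 (1/32)) ?_
    · calc (-1 : ℝ) / 64 = ∫ _ in (0:ℝ)..(1/32), (-2⁻¹ : ℝ) := by
            rw [intervalIntegral.integral_const]; norm_num
        _ ≤ _ := hmono
    · intro s hs
      obtain ⟨hs1, hs2⟩ := hs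
      obtain ⟨hc0, hc1⟩ := hcos_bounds s hs1 (by linarith)
      have hgs := hlow s ⟨hs1, by linarith⟩
      rcases le_or_gt 0 (g s) with h | h
      · have : 0 ≤ f s := mul_nonneg hc0 h
        simp only [hf] at this ⊢
        linarith
      · have h1 : g s ≤ f s := by
          simp only [hf]
          nlinarith
        simp only [hf] at h1 ⊢
        linarith
  have piece2 : K / 64 ≤ ∫ s in (1 / 32 : ℝ)..t, f s := by
    have hmono := intervalIntegral.integral_mono_on h32
      (intervalIntegrable_const (c := (2⁻¹ * K : ℝ))) (hint (1/32) t) ?_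
    · calc K / 64 ≤ (t - 1/32) * (2⁻¹ * K) := by nlinarith
        _ = ∫ _ in (1/32 : ℝ)..t, (2⁻¹ * K : ℝ) := by
            rw [intervalIntegral.integral_const]; simp [smul_eq_mul]
        _ ≤ _ := hmono
    · intro s hs
      obtain ⟨hs1, hs2⟩ := hs
      have hs0 : 0 ≤ s := by linarith
      obtain ⟨hc0, _⟩ := hcos_bounds s hs0 hs2
      have hchalf : 2⁻¹ ≤ Real.cos (Real.pi * (t - s)) := by
        have e1 : Real.cos (Real.pi / 3) = 1 / 2 := Real.cos_pi_div_three
        have h1 : Real.pi * (t - s) ≤ Real.pi / 3 := by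
          have : Real.pi * (t - s) ≤ Real.pi * (1/3) := by
            apply mul_le_mul_of_nonneg_left _ hπ.le
            linarith
          linarith
        have h2 : 0 ≤ Real.pi * (t - s) := mul_nonneg hπ.le (by linarith)
        have := Real.cos_le_cos_of_nonneg_of_le_pi h2 (by linarith) h1
        rw [e1] at this
        linarith
      have hgs := hhigh s ⟨hs1, by linarith⟩
      simp only [hf]
      calc (2⁻¹ : ℝ) * K ≤ Real.cos (Real.pi * (t - s)) * K := by
            apply mul_le_mul_of_nonneg_right hchalf; linarith
        _ ≤ Real.cos (Real.pi * (t - s)) * g s := by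
            apply mul_le_mul_of_nonneg_left hgs hc0
  have hsplit : ∫ s in (0 : ℝ)..t, f s
      = (∫ s in (0 : ℝ)..(1/32), f s) + ∫ s in (1/32 : ℝ)..t, f s :=
    (intervalIntegral.integral_add_adjacent_intervals (hint 0 (1/32)) (hint (1/32) t)).symm
  have : (K - 1) / 64 ≤ ∫ s in (0 : ℝ)..t, f s := by
    rw [hsplit]
    have := piece1
    have := piece2
    linarith
  exact this

end BMAux

open BMAux in
/-- For `M(t) = ∫_0^t cos(π (t-s)) B_s ds` and any `L > 0`, with positive
probability `M(t) ≥ L` for all `t ∈ [1/16, 3/16]`. -/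
theorem convolution_brownian_large_with_positive_probability
    {Ω : Type*} [MeasurableSpace Ω]
    (P : Measure Ω) (B : ℝ → Ω → ℝ) (hB : IsBrownianMotion P B)
    (L : ℝ) (hL : 0 < L) :
    0 < P {ω | ∀ t ∈ Set.Icc (1 / 16 : ℝ) (3 / 16),
      L ≤ ∫ s in (0 : ℝ)..t, Real.cos (Real.pi * (t - s)) * B s ω} := by
  classical
  haveI := hB.isProbability
  set K : ℝ := 64 * L + 1 with hKdef
  have hK1 : 1 ≤ K := by rw [hKdef]; linarith
  set p1 := gaussianReal 0 1 (Set.Ici 1) with hp1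
  have hp1pos : 0 < p1 := p1_pos
  have hp1ne_top : p1 ≠ ⊤ := measure_ne_top _ _
  have htend : Filter.Tendsto (fun i : ℕ => P (DSet B ((i : ℝ) + 1)⁻¹))
      Filter.atTop (nhds 0) := by
    have hanti : Antitone fun i : ℕ => DSet B ((i : ℝ) + 1)⁻¹ := by
      intro i j hij
      apply DSet_mono
      have h1 : (0 : ℝ) < (i : ℝ) + 1 := by positivity
      have h2 : ((i : ℝ) + 1) ≤ ((j : ℝ) + 1) := by
        have : (i : ℝ) ≤ j := by exact_mod_cast hij
        linarith
      gcongr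
    have h1 := tendsto_measure_iInter_atTop (μ := P)
      (s := fun i : ℕ => DSet B ((i : ℝ) + 1)⁻¹)
      (fun i => (measurableSet_DSet hB.measurable _).nullMeasurableSet)
      hanti ⟨0, measure_ne_top _ _⟩
    rw [iInter_DSet hB.continuous_paths] at h1
    simpa [Function.comp_def] using h1
  obtain ⟨n₀, hn₀⟩ := (ENNReal.tendsto_atTop_zero.mp htend) (p1 / 2)
    (ENNReal.div_pos hp1pos.ne' ENNReal.ofNat_ne_top)
  have hD0 : P (DSet B ((n₀ : ℝ) + 1)⁻¹) ≤ p1 / 2 := hn₀ n₀ le_rfl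
  set N : ℕ := max (n₀ + 1) (Nat.ceil (32 * (K + 1) ^ 2) + 1) with hNdef
  have hNpos : 0 < N := lt_of_lt_of_le (by omega) (le_max_left _ _)
  have hNR : (0 : ℝ) < N := by exact_mod_cast hNpos
  have hNceil : (32 * (K + 1) ^ 2 : ℝ) ≤ N := by
    have h1 : (32 * (K + 1) ^ 2 : ℝ) ≤ Nat.ceil (32 * (K + 1) ^ 2 : ℝ) := Nat.le_ceil _
    have h2 : (Nat.ceil (32 * (K + 1) ^ 2 : ℝ) : ℝ) ≤ N := by
      have := le_trans (Nat.le_succ _) (le_max_right (n₀ + 1) (Nat.ceil (32 * (K + 1) ^ 2 : ℝ) + 1))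
      exact_mod_cast this
    linarith
  have hNn₀ : n₀ + 1 ≤ 32 * N := by
    have h := le_max_left (n₀ + 1) (Nat.ceil (32 * (K + 1) ^ 2) + 1)
    omega
  set cc : ℝ := (K + 1) / N with hccdef
  have hccpos : 0 < cc := by rw [hccdef]; apply div_pos (by linarith) hNR
  have hcc_sqrt : cc ≤ Real.sqrt ((32 * N : ℝ)⁻¹) := by
    rw [Real.le_sqrt hccpos.le (by positivity)]
    rw [hccdef, div_pow, inv_eq_one_div, div_le_div_iff₀ (by positivity) (by positivity)]
    nlinarith [hNceil, hNR, sq_nonneg (K + 1)]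
  set e : ℕ → ℚ := fun j => (Denumerable.eqv ℚ).symm j with hedef
  have hesurj : Function.Surjective e := (Denumerable.eqv ℚ).symm.surjective
  set ρ : ℕ → ℚ := fun j => max 0 (min (3 / 16) (e j)) with hρdef
  have hρ0 : ∀ j, 0 ≤ ρ j := fun j => le_max_left _ _
  have hρ1 : ∀ j, ρ j ≤ 3 / 16 := fun j => max_le (by norm_num) (min_le_left _ _)
  have hρsurj : ∀ r : ℚ, 0 ≤ r → r ≤ 3 / 16 → ∃ j, ρ j = r := by
    intro r h0 h1
    obtain ⟨j, hj⟩ := hesurj r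
    refine ⟨j, ?_⟩
    rw [hρdef]
    simp only
    rw [hj, min_eq_right h1, max_eq_right h0]
  have hInc : ∀ k, k < 6 * N →
      p1 ≤ P {ω | cc ≤ B ((tq N (k + 1) : ℚ) : ℝ) ω - B ((tq N k : ℚ) : ℝ) ω} := by
    intro k hk
    apply inc_prob hB
    · exact_mod_cast tq_nonneg N k
    · have h1 := tq_succ_sub hNpos k
      have h2 : (0 : ℝ) < (32 * (N : ℝ))⁻¹ := by positivity
      push_cast at h1 ⊢
      linarith
    · rw [tq_succ_sub hNpos k]
      exact hcc_sqrt
  have hG : ∀ k, k < 6 * N → p1 / 2 ≤ P (GSet B N cc k) := by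
    intro k hk
    set A := {ω | cc ≤ B ((tq N (k + 1) : ℚ) : ℝ) ω - B ((tq N k : ℚ) : ℝ) ω} with hA
    have hsub : A \ DSet B ((n₀ : ℝ) + 1)⁻¹ ⊆ GSet B N cc k := by
      rintro ω ⟨hωA, hωD⟩
      constructor
      · intro r hr1 hr2
        by_contra hcon
        push_neg at hcon
        apply hωD
        simp only [DSet, Set.mem_iUnion]
        refine ⟨tq N k, r, ⟨?_, ?_⟩, ⟨?_, ?_⟩, ?_, hcon⟩
        · exact_mod_cast tq_nonneg N k
        · calc ((tq N k : ℚ) : ℝ) ≤ ((3 / 16 : ℚ) : ℝ) := by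
                exact_mod_cast tq_le_316 hNpos (by omega)
            _ ≤ 1 := by norm_num
        · have h0 : (0 : ℚ) ≤ tq N k := tq_nonneg N k
          exact_mod_cast le_trans h0 hr1
        · have h316 : r ≤ (3 / 16 : ℚ) := le_trans hr2 (tq_le_316 hNpos (by omega))
          calc ((r : ℚ) : ℝ) ≤ ((3 / 16 : ℚ) : ℝ) := by exact_mod_cast h316
            _ ≤ 1 := by norm_num
        · have h1 : ((tq N k : ℚ) : ℝ) ≤ ((r : ℚ) : ℝ) := by exact_mod_cast hr1
          have h2 : ((r : ℚ) : ℝ) ≤ ((tq N (k + 1) : ℚ) : ℝ) := by exact_mod_cast hr2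
          rw [abs_sub_comm, abs_of_nonneg (by linarith)]
          have h3 := tq_succ_sub hNpos k
          have h4 : ((32 * N : ℝ))⁻¹ ≤ ((n₀ : ℝ) + 1)⁻¹ := by
            have h5 : ((n₀ : ℝ) + 1) ≤ (32 * N : ℝ) := by exact_mod_cast hNn₀
            have h6 : (0 : ℝ) < (n₀ : ℝ) + 1 := by positivity
            gcongr
          linarith
      · exact hωA
    have hle : p1 ≤ P (GSet B N cc k) + p1 / 2 := by
      calc p1 ≤ P A := hInc k hk
        _ ≤ P (A ∩ DSet B ((n₀ : ℝ) + 1)⁻¹) + P (A \ DSet B ((n₀ : ℝ) + 1)⁻¹) :=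
            measure_le_inter_add_diff P A _
        _ ≤ p1 / 2 + P (GSet B N cc k) := by
            apply add_le_add
            · exact le_trans (measure_mono Set.inter_subset_right) hD0
            · exact measure_mono hsub
        _ = P (GSet B N cc k) + p1 / 2 := add_comm _ _
    have h7 := tsub_le_iff_right.mpr hle
    rwa [ENNReal.sub_half hp1ne_top] at h7
  set E := ⋂ k ∈ Finset.range (6 * N), GSet B N cc k with hE
  have hEbound : (p1 / 2) ^ (6 * N) ≤ P E := by
    have hstage : ∀ m, P (⋂ k ∈ Finset.range (6 * N), GmSet B N cc ρ m k)
        = ∏ k ∈ Finset.range (6 * N), P (GmSet B N cc ρ m k) :=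
      fun m => stage_prod hB hNpos cc ρ hρ0 hρ1 m
    have hGsub : ∀ m k, GSet B N cc k ⊆ GmSet B N cc ρ m k := by
      intro m k ω hω
      exact ⟨fun j hj hcond => hω.1 (ρ j) hcond.1 hcond.2, hω.2⟩
    have hterm : ∀ m, (p1 / 2) ^ (6 * N)
        ≤ P (⋂ k ∈ Finset.range (6 * N), GmSet B N cc ρ m k) := by
      intro m
      rw [hstage m]
      calc (p1 / 2) ^ (6 * N) = ∏ _k ∈ Finset.range (6 * N), (p1 / 2) := by
            rw [Finset.prod_const, Finset.card_range]
        _ ≤ ∏ k ∈ Finset.range (6 * N), P (GmSet B N cc ρ m k) := by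
            apply Finset.prod_le_prod'
            intro k hk
            exact le_trans (hG k (Finset.mem_range.mp hk)) (measure_mono (hGsub m k))
    have hlimEq : (⋂ m : ℕ, ⋂ k ∈ Finset.range (6 * N), GmSet B N cc ρ m k) = E := by
      rw [hE]
      ext ω
      simp only [Set.mem_iInter]
      constructor
      · intro h k hk
        constructor
        · intro r hr1 hr2
          have hr0 : 0 ≤ r := le_trans (tq_nonneg N k) hr1
          have hr316 : r ≤ 3 / 16 := by
            refine le_trans hr2 (tq_le_316 hNpos ?_)
            have := Finset.mem_range.mp hk
            omega
          obtain ⟨j, hj⟩ := hρsurj r hr0 hr316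
          have h8 := (h (j + 1) k hk).1 j (by omega) (by rw [hj]; exact ⟨hr1, hr2⟩)
          rwa [hj] at h8
        · exact (h 0 k hk).2
      · intro h m k hk
        exact ⟨fun j hj hcond => (h k hk).1 (ρ j) hcond.1 hcond.2, (h k hk).2⟩
    have hanti : Antitone fun m => ⋂ k ∈ Finset.range (6 * N), GmSet B N cc ρ m k := by
      intro m m' hmm'
      apply Set.iInter₂_mono
      intro k hk ω hω
      exact ⟨fun j hj hcond => hω.1 j (by omega) hcond, hω.2⟩
    have hmeasm : ∀ m : ℕ,
        NullMeasurableSet (⋂ k ∈ Finset.range (6 * N), GmSet B N cc ρ m k) P := fun m =>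
      (MeasurableSet.biInter (Set.to_countable _)
        (fun k _ => measurableSet_GmSet hB.measurable N cc ρ m k)).nullMeasurableSet
    have hlim := tendsto_measure_iInter_atTop hmeasm hanti ⟨0, measure_ne_top _ _⟩
    rw [hlimEq] at hlim
    exact ge_of_tendsto' hlim hterm
  have hEpos : 0 < P E := by
    refine lt_of_lt_of_le ?_ hEbound
    exact ENNReal.pow_pos (ENNReal.div_pos hp1pos.ne' ENNReal.ofNat_ne_top) _
  refine lt_of_lt_of_le hEpos (measure_mono ?_)
  intro ω hω
  rw [hE] at hω
  simp only [Set.mem_iInter] at hω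
  have hωk : ∀ k, k < 6 * N → ω ∈ GSet B N cc k := fun k hk =>
    hω k (Finset.mem_range.mpr hk)
  have stair0 : ∀ k, k ≤ 6 * N → (k : ℝ) * cc ≤ B ((tq N k : ℚ) : ℝ) ω := by
    intro k
    induction k with
    | zero =>
      intro _
      have h9 : ((tq N 0 : ℚ) : ℝ) = 0 := by rw [tq_zero]; norm_num
      rw [h9, hB.start ω]
      norm_num
    | succ k ih =>
      intro hk
      have h1 := ih (by omega)
      have h2 := (hωk k (by omega)).2
      push_cast
      linarith
  have stairblock : ∀ k, k < 6 * N → ∀ s : ℝ,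
      ((tq N k : ℚ) : ℝ) ≤ s → s ≤ ((tq N (k + 1) : ℚ) : ℝ) →
      (k : ℝ) * cc - 2⁻¹ ≤ B s ω := by
    intro k hk s hs1 hs2
    have hrat : ∀ r : ℚ, tq N k ≤ r → r ≤ tq N (k + 1) →
        (k : ℝ) * cc - 2⁻¹ ≤ B ((r : ℚ) : ℝ) ω := by
      intro r h1 h2
      have h10 := (hωk k hk).1 r h1 h2
      have h3 := stair0 k (by omega)
      linarith
    exact ratDense (hB.continuous_paths ω) hrat hs1 hs2
  have hlow : ∀ s ∈ Set.Icc (0 : ℝ) (3 / 16), -2⁻¹ ≤ B s ω := by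
    intro s hs
    obtain ⟨hs1, hs2⟩ := hs
    have h11 : ((tq N 0 : ℚ) : ℝ) ≤ s := by
      rw [tq_zero]; norm_num; exact hs1
    have h12 : s ≤ ((tq N (6 * N) : ℚ) : ℝ) := by
      rw [tq_6N hNpos]
      push_cast
      linarith
    obtain ⟨k, hk1, hk2, hk3, hk4⟩ :=
      cover (fun k => ((tq N k : ℚ) : ℝ)) (show 0 < 6 * N by omega) h11 h12
    have h13 := stairblock k hk2 s hk3 hk4
    have hkc : 0 ≤ (k : ℝ) * cc := by positivity
    linarith
  have hhigh : ∀ s ∈ Set.Icc (1 / 32 : ℝ) (3 / 16), K ≤ B s ω := by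
    intro s hs
    obtain ⟨hs1, hs2⟩ := hs
    have h11 : ((tq N N : ℚ) : ℝ) ≤ s := by
      rw [tq_N hNpos]
      push_cast
      linarith
    have h12 : s ≤ ((tq N (6 * N) : ℚ) : ℝ) := by
      rw [tq_6N hNpos]
      push_cast
      linarith
    obtain ⟨k, hk1, hk2, hk3, hk4⟩ :=
      cover (fun k => ((tq N k : ℚ) : ℝ)) (show N < 6 * N by omega) h11 h12
    have h13 := stairblock k hk2 s hk3 hk4
    have h14 : (N : ℝ) * cc ≤ (k : ℝ) * cc := by
      apply mul_le_mul_of_nonneg_right _ hccpos.le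
      exact_mod_cast hk1
    have h15 : (N : ℝ) * cc = K + 1 := by
      rw [hccdef]
      field_simp
    linarith
  intro t ht
  have h16 := integral_bound (fun s => B s ω) (hB.continuous_paths ω) K hK1 hlow hhigh ht
  have hKL : (K - 1) / 64 = L := by rw [hKdef]; ring
  linarith
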